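/- Let f : ℝⁿ → ℝ be twice continuously differentiable with L-Lipschitz Hessian, let m > 0 and α ∈ (0, 1/2), and let H be a real symmetric n×n matrix with m·I ⪯ H and ∇²f(x) ⪯ H at a point x ∈ ℝⁿ. Set Δx = −H⁻¹∇f(x). If ‖∇f(x)‖ ≤ (3m²/L)(1 − 2α), then the Armijo condition with unit step size holds: f(x + Δx) ≤ f(x) + α⟨∇f(x), Δx⟩. -/

import Mathlib

open scoped InnerProductSpace

/-- Comparison: if the derivative is nonneg on `[0,1]`, the function is ≥ its value at 0. -/
lemma ncn_mono_aux (u u' : ℝ → ℝ) (hu : ∀ t, HasDerivAt u (u' t) t)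
    (h0 : ∀ t ∈ Set.Icc (0:ℝ) 1, 0 ≤ u' t) : ∀ t ∈ Set.Icc (0:ℝ) 1, u 0 ≤ u t := by
  intro t ht
  have hmono : MonotoneOn u (Set.Icc (0:ℝ) 1) := by
    apply monotoneOn_of_deriv_nonneg (convex_Icc 0 1)
    · exact fun s _ => (hu s).continuousAt.continuousWithinAt
    · exact fun s _ => (hu s).differentiableAt.differentiableWithinAt
    · intro s hs
      rw [(hu s).deriv]
      rw [interior_Icc] at hs
      exact h0 s ⟨hs.1.le, hs.2.le⟩
  exact hmono ⟨le_refl 0, zero_le_one⟩ ht ht.1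

/-- Second-order Taylor upper bound along a segment, with linear growth of the
second directional derivative. -/
lemma ncn_taylor_bound {n : ℕ} (f : EuclideanSpace ℝ (Fin n) → ℝ)
    (hf : ContDiff ℝ 2 f) (x Δ : EuclideanSpace ℝ (Fin n)) (C : ℝ)
    (hC : ∀ t ∈ Set.Icc (0:ℝ) 1,
      iteratedFDeriv ℝ 2 f (x + t • Δ) ![Δ, Δ] ≤ iteratedFDeriv ℝ 2 f x ![Δ, Δ] + C * t) :
    f (x + Δ) ≤ f x + fderiv ℝ f x Δ + (1/2) * iteratedFDeriv ℝ 2 f x ![Δ, Δ] + C/6 := by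
  set φ : ℝ → ℝ := fun t => f (x + t • Δ) with hφdef
  set g1 : ℝ → ℝ := fun t => fderiv ℝ f (x + t • Δ) Δ with hg1def
  set h2 : ℝ → ℝ := fun t => iteratedFDeriv ℝ 2 f (x + t • Δ) ![Δ, Δ] with hh2def
  have hline : ∀ t : ℝ, HasDerivAt (fun s : ℝ => x + s • Δ) Δ t := by
    intro t
    simpa using ((hasDerivAt_id t).smul_const Δ).const_add x
  have hφ : ∀ t, HasDerivAt φ (g1 t) t := by
    intro t
    exact ((hf.differentiable two_ne_zero (x + t • Δ)).hasFDerivAt).comp_hasDerivAt t (hline t)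
  have hFc : ContDiff ℝ 1 (fderiv ℝ f) := hf.fderiv_right (by norm_num)
  have hg1 : ∀ t, HasDerivAt g1 (h2 t) t := by
    intro t
    have h1 : HasDerivAt (fun s : ℝ => fderiv ℝ f (x + s • Δ))
        (fderiv ℝ (fderiv ℝ f) (x + t • Δ) Δ) t :=
      ((hFc.differentiable one_ne_zero (x + t • Δ)).hasFDerivAt).comp_hasDerivAt t (hline t)
    have h2' := h1.clm_apply (hasDerivAt_const t Δ)
    simp only [map_zero, add_zero] at h2'
    have : h2 t = fderiv ℝ (fderiv ℝ f) (x + t • Δ) Δ Δ := by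
      rw [hh2def]
      simp [iteratedFDeriv_two_apply]
    rw [this]
    exact h2'
  have hC' : ∀ t ∈ Set.Icc (0:ℝ) 1, h2 t ≤ h2 0 + C * t := by
    intro t ht
    simpa [hh2def] using hC t ht
  -- step 1 : bound on g1
  have step1 : ∀ t ∈ Set.Icc (0:ℝ) 1, g1 t ≤ g1 0 + h2 0 * t + C * t^2 / 2 := by
    have hu : ∀ t : ℝ, HasDerivAt (fun s => g1 0 + h2 0 * s + C * s^2 / 2 - g1 s)
        (h2 0 + C * t - h2 t) t := by
      intro t
      have ha : HasDerivAt (fun s : ℝ => g1 0 + h2 0 * s + C * s^2 / 2) (h2 0 + C * t) t := by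
        have h1 : HasDerivAt (fun s : ℝ => h2 0 * s) (h2 0) t := by
          simpa using (hasDerivAt_id t).const_mul (h2 0)
        have h2'' : HasDerivAt (fun s : ℝ => C * s^2 / 2) (C * t) t := by
          have := ((hasDerivAt_pow 2 t).const_mul C).div_const 2
          simpa [mul_comm, mul_assoc, mul_div_assoc] using this
        exact ((h1.const_add (g1 0)).add h2'')
      exact ha.sub (hg1 t)
    have := ncn_mono_aux _ _ hu (fun t ht => by
      have := hC' t ht
      simp only [sub_nonneg]
      linarith)
    intro t ht
    have h := this t ht
    nlinarith [h]
  -- step 2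
  have hu2 : ∀ t : ℝ, HasDerivAt
      (fun s => φ 0 + g1 0 * s + h2 0 * s^2 / 2 + C * s^3 / 6 - φ s)
      (g1 0 + h2 0 * t + C * t^2 / 2 - g1 t) t := by
    intro t
    have h1 : HasDerivAt (fun s : ℝ => g1 0 * s) (g1 0) t := by
      simpa using (hasDerivAt_id t).const_mul (g1 0)
    have h2'' : HasDerivAt (fun s : ℝ => h2 0 * s^2 / 2) (h2 0 * t) t := by
      have := ((hasDerivAt_pow 2 t).const_mul (h2 0)).div_const 2
      simpa [mul_comm, mul_assoc, mul_div_assoc] using this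
    have h3 : HasDerivAt (fun s : ℝ => C * s^3 / 6) (C * t^2 / 2) t := by
      have := ((hasDerivAt_pow 3 t).const_mul C).div_const 6
      norm_num at this
      rw [show C * t ^ 2 / 2 = C * (3 * t ^ 2) / 6 by ring]
      exact this
    have := (((h1.const_add (φ 0)).add h2'').add h3).sub (hφ t)
    exact this
  have step2 := ncn_mono_aux _ _ hu2 (fun t ht => by
    have := step1 t ht
    simp only [sub_nonneg]
    linarith)
  have h := step2 1 ⟨zero_le_one, le_refl 1⟩
  simp only [one_smul, zero_smul, add_zero, one_pow, mul_one] at h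
  rw [hφdef, hg1def, hh2def] at h
  simp only [one_smul, zero_smul, add_zero] at h
  linarith

lemma ncn_inner_psd {n : ℕ} (M : Matrix (Fin n) (Fin n) ℝ) (hM : M.PosSemidef)
    (v : EuclideanSpace ℝ (Fin n)) : 0 ≤ ⟪v, Matrix.toEuclideanLin M v⟫_ℝ := by
  have h := hM.dotProduct_mulVec_nonneg (WithLp.equiv 2 _ v)
  rw [EuclideanSpace.inner_eq_star_dotProduct, dotProduct_comm]
  simpa [Matrix.toEuclideanLin_apply] using h

lemma ncn_lin_one {n : ℕ} (v : EuclideanSpace ℝ (Fin n)) :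
    Matrix.toEuclideanLin (1 : Matrix (Fin n) (Fin n) ℝ) v = v := by
  apply (WithLp.equiv 2 _).injective
  simp [Matrix.toEuclideanLin_apply, Matrix.one_mulVec]

lemma ncn_smul_one {n : ℕ} (m : ℝ) (v : EuclideanSpace ℝ (Fin n)) :
    Matrix.toEuclideanLin (m • (1 : Matrix (Fin n) (Fin n) ℝ)) v = m • v := by
  apply (WithLp.equiv 2 _).injective
  simp [Matrix.toEuclideanLin_apply, Matrix.smul_mulVec, Matrix.one_mulVec]

set_option maxHeartbeats 2000000 in
/-- Unit step size satisfies the Armijo condition for the Nonconvex Newton step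
`Δx = -H⁻¹∇f(x)`: if `f` is twice continuously differentiable with `L`-Lipschitz Hessian,
`H` is symmetric with `m·I ⪯ H` and `∇²f(x) ⪯ H`, `α ∈ (0, 1/2)`, and
`‖∇f(x)‖ ≤ (3m²/L)(1 - 2α)`, then `f(x + Δx) ≤ f(x) + α⟪∇f(x), Δx⟫`. -/
theorem ncn_unit_step_armijo {n : ℕ}
    (f : EuclideanSpace ℝ (Fin n) → ℝ) (L m α : ℝ)
    (Hess : EuclideanSpace ℝ (Fin n) → Matrix (Fin n) (Fin n) ℝ)
    (hf : ContDiff ℝ 2 f)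
    (hHessf : ∀ y u v, iteratedFDeriv ℝ 2 f y ![u, v] = ⟪u, Matrix.toEuclideanLin (Hess y) v⟫_ℝ)
    (hLip : ∀ x y, ‖Matrix.toEuclideanCLM (𝕜 := ℝ) (Hess x - Hess y)‖ ≤ L * ‖x - y‖)
    (hm : 0 < m) (hα : α ∈ Set.Ioo (0 : ℝ) (1/2))
    (x : EuclideanSpace ℝ (Fin n))
    (H : Matrix (Fin n) (Fin n) ℝ) (hH : H.IsHermitian)
    (hlow : (H - m • (1 : Matrix (Fin n) (Fin n) ℝ)).PosSemidef)
    (hHx : (H - Hess x).PosSemidef)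
    (hgrad : ‖gradient f x‖ ≤ 3 * m ^ 2 / L * (1 - 2 * α)) :
    f (x + -(Matrix.toEuclideanLin H⁻¹ (gradient f x))) ≤
      f x + α * ⟪gradient f x, -(Matrix.toEuclideanLin H⁻¹ (gradient f x))⟫_ℝ := by
  obtain ⟨hα0, hα2⟩ := hα
  set g := gradient f x with hg
  set Δ := -(Matrix.toEuclideanLin H⁻¹ g) with hΔ
  clear_value Δ
  by_cases hL : L ≤ 0
  · have hrhs : 3 * m ^ 2 / L * (1 - 2 * α) ≤ 0 := by
      rcases lt_or_eq_of_le hL with h | h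
      · have h1 : 3 * m ^ 2 / L < 0 := div_neg_of_pos_of_neg (by positivity) h
        nlinarith
      · rw [h]; simp
    have hg0 : g = 0 := norm_eq_zero.mp (le_antisymm (le_trans hgrad hrhs) (norm_nonneg g))
    rw [hΔ, hg0]
    simp
  push_neg at hL
  -- H is positive definite, hence invertible
  have hHpd : H.PosDef := by
    refine Matrix.PosDef.of_dotProduct_mulVec_pos hH (fun v hv => ?_)
    have h1 := hlow.dotProduct_mulVec_nonneg v
    rw [Matrix.sub_mulVec, dotProduct_sub, Matrix.smul_mulVec,
      Matrix.one_mulVec] at h1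
    have h2 : (0:ℝ) < dotProduct (star v) v :=
      Matrix.dotProduct_star_self_pos_iff.mpr hv
    have h3 : dotProduct (star v) (m • v) = m * dotProduct (star v) v := by
      simp [dotProduct_smul]
    rw [h3] at h1
    nlinarith
  have hmul : H * H⁻¹ = 1 :=
    Matrix.mul_nonsing_inv H (isUnit_iff_ne_zero.mpr hHpd.det_pos.ne')
  have hHΔ : Matrix.toEuclideanLin H Δ = -g := by
    rw [hΔ, map_neg]
    congr 1
    apply (WithLp.equiv 2 _).injective
    simp [Matrix.toEuclideanLin_apply, Matrix.mulVec_mulVec, hmul, Matrix.one_mulVec]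
  set S := ⟪Δ, Matrix.toEuclideanLin H Δ⟫_ℝ with hSdef
  have hS : ⟪g, Δ⟫_ℝ = -S := by
    have h1 : S = ⟪Δ, -g⟫_ℝ := by rw [hSdef, hHΔ]
    rw [h1, inner_neg_right, neg_neg]
    exact real_inner_comm Δ g
  set r := ‖Δ‖ with hr
  have hr0 : 0 ≤ r := norm_nonneg Δ
  -- m‖Δ‖² ≤ S
  have hsub1 : Matrix.toEuclideanLin (H - m • (1 : Matrix (Fin n) (Fin n) ℝ)) Δ
      = Matrix.toEuclideanLin H Δ - m • Δ := by
    have h := map_sub (Matrix.toEuclideanLin (𝕜 := ℝ) (m := Fin n) (n := Fin n)) H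
      (m • (1 : Matrix (Fin n) (Fin n) ℝ))
    rw [h]
    simp [ncn_smul_one, ncn_lin_one]
  have hms : m * r ^ 2 ≤ S := by
    have h := ncn_inner_psd _ hlow Δ
    rw [hsub1, inner_sub_right, real_inner_smul_right, real_inner_self_eq_norm_sq] at h
    rw [hSdef]
    linarith
  -- Q ≤ S
  have hsub2 : Matrix.toEuclideanLin (H - Hess x) Δ
      = Matrix.toEuclideanLin H Δ - Matrix.toEuclideanLin (Hess x) Δ := by
    have h := map_sub (Matrix.toEuclideanLin (𝕜 := ℝ) (m := Fin n) (n := Fin n)) H (Hess x)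
    rw [h]
    simp
  have hQS : ⟪Δ, Matrix.toEuclideanLin (Hess x) Δ⟫_ℝ ≤ S := by
    have h := ncn_inner_psd _ hHx Δ
    rw [hsub2, inner_sub_right] at h
    rw [hSdef]
    linarith
  -- m r ≤ ‖g‖
  have hmr : m * r ≤ ‖g‖ := by
    have h1 : S ≤ r * ‖g‖ := by
      calc S ≤ ‖Δ‖ * ‖Matrix.toEuclideanLin H Δ‖ := real_inner_le_norm _ _
        _ = r * ‖g‖ := by rw [hHΔ, norm_neg g, ← hr]
    rcases eq_or_lt_of_le hr0 with h | h
    · rw [← h]; simp [norm_nonneg g]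
    · nlinarith
  have hLr : L * r ≤ 3 * m * (1 - 2 * α) := by
    have h1 : ‖g‖ * L ≤ 3 * m ^ 2 * (1 - 2 * α) := by
      have h := mul_le_mul_of_nonneg_right hgrad hL.le
      have e : 3 * m ^ 2 / L * (1 - 2 * α) * L = 3 * m ^ 2 * (1 - 2 * α) := by
        field_simp
      rwa [e] at h
    have h2 : m * r * L ≤ 3 * m ^ 2 * (1 - 2 * α) :=
      le_trans (mul_le_mul_of_nonneg_right hmr hL.le) h1
    nlinarith
  -- Taylor bound
  have hC : ∀ t ∈ Set.Icc (0:ℝ) 1,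
      iteratedFDeriv ℝ 2 f (x + t • Δ) ![Δ, Δ] ≤ iteratedFDeriv ℝ 2 f x ![Δ, Δ]
        + (L * r ^ 3) * t := by
    intro t ht
    rw [hHessf, hHessf]
    have hsub3 : Matrix.toEuclideanLin (Hess (x + t • Δ) - Hess x) Δ
        = Matrix.toEuclideanLin (Hess (x + t • Δ)) Δ - Matrix.toEuclideanLin (Hess x) Δ := by
      have h := map_sub (Matrix.toEuclideanLin (𝕜 := ℝ) (m := Fin n) (n := Fin n))
        (Hess (x + t • Δ)) (Hess x)
      rw [h]; simp
    have hCLM : Matrix.toEuclideanLin (Hess (x + t • Δ) - Hess x) Δ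
        = Matrix.toEuclideanCLM (𝕜 := ℝ) (Hess (x + t • Δ) - Hess x) Δ := by
      rw [← Matrix.coe_toEuclideanCLM_eq_toEuclideanLin]; rfl
    have hb : ⟪Δ, Matrix.toEuclideanLin (Hess (x + t • Δ) - Hess x) Δ⟫_ℝ
        ≤ r * (L * (t * r) * r) := by
      calc ⟪Δ, Matrix.toEuclideanLin (Hess (x + t • Δ) - Hess x) Δ⟫_ℝ
          ≤ ‖Δ‖ * ‖Matrix.toEuclideanLin (Hess (x + t • Δ) - Hess x) Δ‖ :=
            real_inner_le_norm _ _
        _ ≤ r * (L * (t * r) * r) := by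
            rw [hCLM]
            have h1 : ‖Matrix.toEuclideanCLM (𝕜 := ℝ) (Hess (x + t • Δ) - Hess x) Δ‖
                ≤ ‖Matrix.toEuclideanCLM (𝕜 := ℝ) (Hess (x + t • Δ) - Hess x)‖ * ‖Δ‖ :=
              ContinuousLinearMap.le_opNorm _ _
            have h2 : ‖Matrix.toEuclideanCLM (𝕜 := ℝ) (Hess (x + t • Δ) - Hess x)‖
                ≤ L * (t * r) := by
              have := hLip (x + t • Δ) x
              rwa [add_sub_cancel_left, norm_smul, Real.norm_eq_abs,
                abs_of_nonneg ht.1] at this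
            have h3 : ‖Matrix.toEuclideanCLM (𝕜 := ℝ) (Hess (x + t • Δ) - Hess x) Δ‖
                ≤ L * (t * r) * r := by
              calc _ ≤ ‖Matrix.toEuclideanCLM (𝕜 := ℝ) (Hess (x + t • Δ) - Hess x)‖ * ‖Δ‖ := h1
                _ ≤ L * (t * r) * r := by
                    apply mul_le_mul_of_nonneg_right h2 (norm_nonneg Δ)
            exact mul_le_mul_of_nonneg_left h3 hr0
    have heq : ⟪Δ, Matrix.toEuclideanLin (Hess (x + t • Δ)) Δ⟫_ℝ
        - ⟪Δ, Matrix.toEuclideanLin (Hess x) Δ⟫_ℝ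
        = ⟪Δ, Matrix.toEuclideanLin (Hess (x + t • Δ) - Hess x) Δ⟫_ℝ := by
      rw [hsub3, inner_sub_right]
    nlinarith [hb, heq]
  have htay := ncn_taylor_bound f hf x Δ (L * r ^ 3) hC
  rw [hHessf] at htay
  have hfd : fderiv ℝ f x Δ = ⟪g, Δ⟫_ℝ := by
    rw [hg]
    unfold gradient
    rw [← InnerProductSpace.toDual_apply_apply, LinearIsometryEquiv.apply_symm_apply]
  rw [hfd] at htay
  -- final arithmetic
  have key : L * r ^ 3 / 6 ≤ (1/2 - α) * S := by
    have h1 : L * r * r ^ 2 ≤ 3 * m * (1 - 2 * α) * r ^ 2 :=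
      mul_le_mul_of_nonneg_right hLr (sq_nonneg r)
    have h2 : (1/2 - α) * (m * r ^ 2) ≤ (1/2 - α) * S :=
      mul_le_mul_of_nonneg_left hms (by linarith)
    nlinarith
  rw [hS] at htay ⊢
  linarith [htay, hQS, key]
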